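/- Let K be a field and F a finite field extension of K whose degree [F : K] is relatively prime to 6 (i.e., divisible by neither 2 nor 3). Then for every b ∈ F, the intermediate fields satisfy K(b³ − 3b) = K(b). -/

import Mathlib

/-- If `F/K` is a finite field extension of degree relatively prime to `6`, then for every
`b ∈ F` we have `K(b³ - 3b) = K(b)`. -/
theorem adjoin_cube_sub_three_eq_adjoin
    (K F : Type*) [Field K] [Field F] [Algebra K F] [FiniteDimensional K F]
    (h : (Module.finrank K F).Coprime 6) (b : F) :
    IntermediateField.adjoin K {b ^ 3 - 3 * b} = IntermediateField.adjoin K {b} := by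
  set a : F := b ^ 3 - 3 * b with ha
  set E := IntermediateField.adjoin K {a} with hE
  have hale : E ≤ IntermediateField.adjoin K {b} := by
    rw [IntermediateField.adjoin_simple_le_iff]
    have hb : b ∈ IntermediateField.adjoin K {b} :=
      IntermediateField.mem_adjoin_simple_self K b
    have : a = b ^ 3 - (b + b + b) := by rw [ha]; ring
    rw [this]
    exact sub_mem (pow_mem hb 3) (add_mem (add_mem hb hb) hb)
  refine le_antisymm hale ?_
  rw [IntermediateField.adjoin_simple_le_iff]
  -- b is a root of X^3 - 3X - a over E
  have haE : a ∈ E := IntermediateField.mem_adjoin_simple_self K a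
  set p : Polynomial E := Polynomial.X ^ 3 - Polynomial.C 3 * Polynomial.X
      - Polynomial.C ⟨a, haE⟩ with hp
  have hmon : p.Monic := by
    rw [hp, sub_sub]
    apply Polynomial.monic_X_pow_sub
    apply lt_of_le_of_lt (Polynomial.degree_add_le _ _)
    apply max_lt
    · calc (Polynomial.C (3 : E) * Polynomial.X).degree
          ≤ (0 + 1 : WithBot ℕ) := (Polynomial.degree_mul_le _ _).trans
            (add_le_add Polynomial.degree_C_le Polynomial.degree_X_le)
        _ < 3 := by decide
    · exact lt_of_le_of_lt Polynomial.degree_C_le (by decide)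
  have hdeg : p.natDegree = 3 := by
    rw [hp]
    compute_degree!
  have hroot : Polynomial.aeval b p = 0 := by
    simp only [hp, map_sub, map_mul, map_pow, Polynomial.aeval_X, Polynomial.aeval_C,
      map_ofNat]
    have haa : algebraMap E F ⟨a, haE⟩ = a := rfl
    rw [haa, ha]
    ring
  have hint : IsIntegral E b := ⟨p, hmon, by rwa [Polynomial.aeval_def] at hroot⟩
  have hmindeg : (minpoly E b).natDegree ≤ 3 := by
    rw [← hdeg]
    exact Polynomial.natDegree_le_of_dvd (minpoly.dvd E b (by simpa using hroot)) hmon.ne_zero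
  set d := Module.finrank E (IntermediateField.adjoin E {b}) with hd
  have hdeq : d = (minpoly E b).natDegree := IntermediateField.adjoin.finrank hint
  have hdvd1 : d ∣ Module.finrank E F := by
    exact ⟨Module.finrank (IntermediateField.adjoin E {b}) F,
      (Module.finrank_mul_finrank E (IntermediateField.adjoin E {b}) F).symm⟩
  have hdvd2 : Module.finrank E F ∣ Module.finrank K F := by
    exact ⟨Module.finrank K E, by
      rw [mul_comm]; exact (Module.finrank_mul_finrank K E F).symm⟩
  have hdvd : d ∣ Module.finrank K F := hdvd1.trans hdvd2
  have hcop : d.Coprime 6 := Nat.Coprime.coprime_dvd_left hdvd h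
  have hdpos : 0 < d := Module.finrank_pos
  have hdle : d ≤ 3 := hdeq ▸ hmindeg
  have hne2 : d ≠ 2 := by intro h2; rw [h2] at hcop; exact absurd hcop (by decide)
  have hne3 : d ≠ 3 := by intro h3; rw [h3] at hcop; exact absurd hcop (by decide)
  have hd1 : d = 1 := by omega
  have hbot : IntermediateField.adjoin E {b} = ⊥ :=
    IntermediateField.finrank_eq_one_iff.mp hd1
  have hbmem : b ∈ (⊥ : IntermediateField E F) := by
    rw [← hbot]; exact IntermediateField.mem_adjoin_simple_self E b
  rw [IntermediateField.mem_bot] at hbmem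
  obtain ⟨c, hc⟩ := hbmem
  rw [← hc]
  exact c.2
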